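/- For every graph G with maximum degree at most 3, ψ_3(G) ≤ min(|V(G)|/2, |E(G)|/2). -/

import Mathlib

open SimpleGraph

variable {V : Type*}

/-- `S` is a `k`-path vertex cover of `G`: every path on `k` vertices meets `S`. -/
def IsPathVC (G : SimpleGraph V) (k : ℕ) (S : Set V) : Prop :=
  ∀ ⦃u v : V⦄ (w : G.Walk u v), w.IsPath → w.length + 1 = k → ∃ x ∈ w.support, x ∈ S

/-- `psi G k` is the minimum cardinality of a `k`-path vertex cover of `G`. -/
noncomputable def psi (G : SimpleGraph V) (k : ℕ) : ℕ :=
  sInf {n | ∃ S : Set V, IsPathVC G k S ∧ S.ncard = n}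

/-- Covering condition for paths on three vertices, phrased on adjacent triples. -/
def Cov (G : SimpleGraph V) (S : Set V) : Prop :=
  ∀ ⦃u v w : V⦄, G.Adj u v → G.Adj v w → u ≠ w → u ∈ S ∨ v ∈ S ∨ w ∈ S

lemma cov_isPathVC {G : SimpleGraph V} {S : Set V} (h : Cov G S) : IsPathVC G 3 S := by
  intro u v w hw hlen
  cases w with
  | nil => simp at hlen
  | cons h1 p =>
    cases p with
    | nil => simp at hlen
    | cons h2 q =>
      cases q with
      | cons h3 r => simp [SimpleGraph.Walk.length_cons] at hlen
      | nil =>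
        rename_i b
        have hnodup := hw.support_nodup
        simp [SimpleGraph.Walk.support_cons] at hnodup
        have huv : u ≠ v := by
          rintro rfl; exact hnodup.1.2 rfl
        rcases h h1 h2 huv with hx | hx | hx
        · exact ⟨u, by simp, hx⟩
        · exact ⟨b, by simp, hx⟩
        · exact ⟨v, by simp, hx⟩

lemma psi_le {G : SimpleGraph V} {S : Finset V} (h : Cov G (↑S : Set V)) :
    psi G 3 ≤ S.card :=
  Nat.sInf_le ⟨↑S, cov_isPathVC h, Set.ncard_coe_finset S⟩

section EdgeBound

variable [Fintype V]

/-- Greedy bound: some cover uses at most half the edges. -/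
lemma exists_cov_half_edges (n : ℕ) : ∀ (G : SimpleGraph V) [DecidableRel G.Adj],
    G.edgeFinset.card = n → ∃ S : Finset V, Cov G (↑S : Set V) ∧ 2 * S.card ≤ n := by
  induction n using Nat.strong_induction_on with
  | _ n ih =>
    intro G _ hcard
    classical
    by_cases hp : ∃ u v w : V, G.Adj u v ∧ G.Adj v w ∧ u ≠ w
    · obtain ⟨u, v, w, huv, hvw, huw⟩ := hp
      -- delete all edges at v
      let G' : SimpleGraph V :=
        { Adj := fun a b => G.Adj a b ∧ a ≠ v ∧ b ≠ v
          symm := ⟨by rintro a b ⟨h1, h2, h3⟩; exact ⟨h1.symm, h3, h2⟩⟩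
          loopless := ⟨by rintro a ⟨h1, -, -⟩; exact G.irrefl h1⟩ }
      haveI : DecidableRel G'.Adj := fun a b => instDecidableAnd
      have hsub : G'.edgeFinset ⊆ (G.edgeFinset.erase s(v, u)).erase s(v, w) := by
        intro e he
        induction e with
        | _ a b =>
          rw [mem_edgeFinset, mem_edgeSet] at he
          obtain ⟨hab, hav, hbv⟩ := he
          have heG : s(a, b) ∈ G.edgeFinset := by rw [mem_edgeFinset, mem_edgeSet]; exact hab
          refine Finset.mem_erase.2 ⟨?_, Finset.mem_erase.2 ⟨?_, heG⟩⟩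
          · simp only [Ne, Sym2.eq_iff]
            rintro (⟨rfl, rfl⟩ | ⟨rfl, rfl⟩)
            · exact hav rfl
            · exact hbv rfl
          · simp only [Ne, Sym2.eq_iff]
            rintro (⟨rfl, rfl⟩ | ⟨rfl, rfl⟩)
            · exact hav rfl
            · exact hbv rfl
      have hmem1 : s(v, u) ∈ G.edgeFinset := by rw [mem_edgeFinset, mem_edgeSet]; exact huv.symm
      have hmem2 : s(v, w) ∈ G.edgeFinset := by rw [mem_edgeFinset, mem_edgeSet]; exact hvw
      have hne12 : s(v, w) ≠ s(v, u) := by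
        simp only [Ne, Sym2.eq_iff]
        rintro (⟨-, rfl⟩ | ⟨rfl, rfl⟩)
        · exact huw rfl
        · exact huw rfl
      have hmem2' : s(v, w) ∈ G.edgeFinset.erase s(v, u) := Finset.mem_erase.2 ⟨hne12, hmem2⟩
      have hcard' : ((G.edgeFinset.erase s(v, u)).erase s(v, w)).card = n - 1 - 1 := by
        rw [Finset.card_erase_of_mem hmem2', Finset.card_erase_of_mem hmem1, hcard]
      have hn2 : 2 ≤ n := by
        have := Finset.one_lt_card.2 ⟨s(v, u), hmem1, s(v, w), hmem2, hne12.symm⟩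
        omega
      have hlt : G'.edgeFinset.card < n := by
        have := Finset.card_le_card hsub
        omega
      obtain ⟨S', hS', hS'card⟩ := ih G'.edgeFinset.card hlt G' rfl
      have hle : G'.edgeFinset.card ≤ n - 2 := by
        have := Finset.card_le_card hsub
        omega
      refine ⟨insert v S', ?_, ?_⟩
      · intro a b c hab hbc hac
        by_cases hav : a = v
        · left; simp [hav]
        by_cases hbv : b = v
        · right; left; simp [hbv]
        by_cases hcv : c = v
        · right; right; simp [hcv]
        · rcases hS' (show G'.Adj a b from ⟨hab, hav, hbv⟩)
            (show G'.Adj b c from ⟨hbc, hbv, hcv⟩) hac with hx | hx | hx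
          · left; simp at hx ⊢; tauto
          · right; left; simp at hx ⊢; tauto
          · right; right; simp at hx ⊢; tauto
      · have := Finset.card_insert_le v S'
        omega
    · push_neg at hp
      exact ⟨∅, fun u v w huv hvw huw => absurd (hp u v w huv hvw) (by simpa using huw), by simp⟩

end EdgeBound

section VertexBound

variable [Fintype V] [DecidableEq V]

/-- Both endpoints of `e` are on the same side of the bipartition `(A, Aᶜ)`. -/
def same (A : Finset V) (e : Sym2 V) : Prop :=
  Sym2.lift ⟨fun u v => (decide (u ∈ A) == decide (v ∈ A)),
    fun u v => by simp only [Bool.beq_comm]⟩ e = true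

instance (A : Finset V) : DecidablePred (same A) := fun _ => instDecidableEqBool _ _

lemma same_mk {A : Finset V} {u v : V} :
    same A s(u, v) ↔ ((u ∈ A ∧ v ∈ A) ∨ (u ∉ A ∧ v ∉ A)) := by
  simp only [same, Sym2.lift_mk, beq_iff_eq, decide_eq_decide]
  tauto

lemma same_compl {A : Finset V} {e : Sym2 V} : same Aᶜ e ↔ same A e := by
  induction e with
  | _ u v =>
    simp only [same_mk, Finset.mem_compl]
    tauto

lemma same_erase {A : Finset V} {x : V} {e : Sym2 V} (hxe : x ∉ e) :
    same (A.erase x) e ↔ same A e := by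
  induction e with
  | _ u v =>
    simp only [Sym2.mem_iff, not_or] at hxe
    have hu : u ≠ x := fun h => hxe.1 h.symm
    have hv : v ≠ x := fun h => hxe.2 h.symm
    simp only [same_mk, Finset.mem_erase, hu, hv, true_and, ne_eq, not_false_eq_true]

/-- The number of monochromatic edges of the bipartition `(A, Aᶜ)`. -/
def mono (G : SimpleGraph V) [DecidableRel G.Adj] (A : Finset V) : ℕ :=
  (G.edgeFinset.filter (same A)).card

lemma mono_compl (G : SimpleGraph V) [DecidableRel G.Adj] (A : Finset V) :
    mono G Aᶜ = mono G A := by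
  unfold mono
  congr 1
  apply Finset.filter_congr
  intro e _
  simp [same_compl]

lemma filter_mem_of_mem (G : SimpleGraph V) [DecidableRel G.Adj] {B : Finset V} {x : V}
    (hx : x ∈ B) :
    (G.edgeFinset.filter (same B)).filter (fun e => x ∈ e)
      = (G.neighborFinset x ∩ B).image (fun y => s(x, y)) := by
  ext e
  simp only [Finset.mem_filter, Finset.mem_image, Finset.mem_inter, mem_neighborFinset]
  constructor
  · rintro ⟨⟨he, hsame⟩, hxe⟩
    rw [Sym2.mem_iff_exists] at hxe
    obtain ⟨y, rfl⟩ := hxe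
    rw [mem_edgeFinset, mem_edgeSet] at he
    refine ⟨y, ⟨he, ?_⟩, rfl⟩
    rcases same_mk.1 hsame with ⟨-, hyB⟩ | ⟨hxB, -⟩
    · exact hyB
    · exact absurd hx hxB
  · rintro ⟨y, ⟨hadj, hyB⟩, rfl⟩
    exact ⟨⟨by rw [mem_edgeFinset, mem_edgeSet]; exact hadj,
      same_mk.2 (Or.inl ⟨hx, hyB⟩)⟩, by simp⟩

lemma filter_mem_of_not_mem (G : SimpleGraph V) [DecidableRel G.Adj] {B : Finset V} {x : V}
    (hx : x ∉ B) :
    (G.edgeFinset.filter (same B)).filter (fun e => x ∈ e)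
      = (G.neighborFinset x \ B).image (fun y => s(x, y)) := by
  ext e
  simp only [Finset.mem_filter, Finset.mem_image, Finset.mem_sdiff, mem_neighborFinset]
  constructor
  · rintro ⟨⟨he, hsame⟩, hxe⟩
    rw [Sym2.mem_iff_exists] at hxe
    obtain ⟨y, rfl⟩ := hxe
    rw [mem_edgeFinset, mem_edgeSet] at he
    refine ⟨y, ⟨he, ?_⟩, rfl⟩
    rcases same_mk.1 hsame with ⟨hxB, -⟩ | ⟨-, hyB⟩
    · exact absurd hxB hx
    · exact hyB
  · rintro ⟨y, ⟨hadj, hyB⟩, rfl⟩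
    exact ⟨⟨by rw [mem_edgeFinset, mem_edgeSet]; exact hadj,
      same_mk.2 (Or.inr ⟨hx, hyB⟩)⟩, by simp⟩

lemma sym2_inj {x : V} : Function.Injective (fun y : V => s(x, y)) := by
  intro y y' h
  rw [Sym2.eq_iff] at h
  rcases h with ⟨-, h⟩ | ⟨h1, h2⟩
  · exact h
  · rw [h2, h1]

lemma key_swap (G : SimpleGraph V) [DecidableRel G.Adj] {A : Finset V} {x : V} (hx : x ∈ A) :
    mono G (A.erase x) + (G.neighborFinset x ∩ A).card
      = mono G A + (G.neighborFinset x \ A).card := by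
  have split : ∀ B : Finset V, mono G B
      = ((G.edgeFinset.filter (same B)).filter (fun e => x ∈ e)).card
        + ((G.edgeFinset.filter (same B)).filter (fun e => x ∉ e)).card :=
    fun B => (Finset.card_filter_add_card_filter_not _).symm
  have h1 := filter_mem_of_mem G hx
  have h2 := filter_mem_of_not_mem G (Finset.notMem_erase x A)
  have hNer : G.neighborFinset x \ (A.erase x) = G.neighborFinset x \ A := by
    ext y
    simp only [Finset.mem_sdiff, mem_neighborFinset, Finset.mem_erase]
    constructor
    · rintro ⟨hadj, hy⟩
      exact ⟨hadj, fun hyA => hy ⟨hadj.ne', hyA⟩⟩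
    · rintro ⟨hadj, hy⟩
      exact ⟨hadj, fun hc => hy hc.2⟩
  have h3 : (G.edgeFinset.filter (same A)).filter (fun e => x ∉ e)
      = (G.edgeFinset.filter (same (A.erase x))).filter (fun e => x ∉ e) := by
    ext e
    simp only [Finset.mem_filter]
    constructor
    · rintro ⟨⟨hp, hq⟩, hr⟩
      exact ⟨⟨hp, (same_erase hr).2 hq⟩, hr⟩
    · rintro ⟨⟨hp, hq⟩, hr⟩
      exact ⟨⟨hp, (same_erase hr).1 hq⟩, hr⟩
  rw [split A, split (A.erase x), h1, h2, hNer, ← h3,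
    Finset.card_image_of_injective _ sym2_inj, Finset.card_image_of_injective _ sym2_inj]
  omega

lemma deg_in_le_one (G : SimpleGraph V) [DecidableRel G.Adj] (hdeg : ∀ v, G.degree v ≤ 3)
    {A : Finset V} (hmin : ∀ B : Finset V, mono G A ≤ mono G B) {x : V} (hx : x ∈ A) :
    (G.neighborFinset x ∩ A).card ≤ 1 := by
  have hk := key_swap G hx
  have hm := hmin (A.erase x)
  have hdx : (G.neighborFinset x ∩ A).card + (G.neighborFinset x \ A).card = G.degree x := by
    rw [Finset.card_inter_add_card_sdiff, card_neighborFinset_eq_degree]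
  have := hdeg x
  omega

lemma exists_cov_half_vertices (G : SimpleGraph V) [DecidableRel G.Adj]
    (hdeg : ∀ v, G.degree v ≤ 3) :
    ∃ S : Finset V, Cov G (↑S : Set V) ∧ 2 * S.card ≤ Fintype.card V := by
  obtain ⟨A, -, hmin'⟩ := Finset.exists_min_image (Finset.univ : Finset (Finset V)) (mono G)
    ⟨∅, Finset.mem_univ _⟩
  have hmin : ∀ B, mono G A ≤ mono G B := fun B => hmin' B (Finset.mem_univ _)
  have hminc : ∀ B, mono G Aᶜ ≤ mono G B := fun B => (mono_compl G A) ▸ hmin B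
  have hA : ∀ x ∈ A, (G.neighborFinset x ∩ A).card ≤ 1 :=
    fun x hx => deg_in_le_one G hdeg hmin hx
  have hAc : ∀ x ∈ Aᶜ, (G.neighborFinset x ∩ Aᶜ).card ≤ 1 :=
    fun x hx => deg_in_le_one G hdeg hminc hx
  have covA : Cov G (↑A : Set V) := by
    intro u v w huv hvw huw
    by_contra hcon
    push_neg at hcon
    obtain ⟨hu, hv, hw⟩ := hcon
    simp only [Finset.coe_mem, Finset.mem_coe] at hu hv hw
    have h2 : 1 < (G.neighborFinset v ∩ Aᶜ).card := by
      apply Finset.one_lt_card.2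
      refine ⟨u, ?_, w, ?_, huw⟩
      · simp only [Finset.mem_inter, mem_neighborFinset, Finset.mem_compl]
        exact ⟨huv.symm, hu⟩
      · simp only [Finset.mem_inter, mem_neighborFinset, Finset.mem_compl]
        exact ⟨hvw, hw⟩
    have := hAc v (Finset.mem_compl.2 hv)
    omega
  have covAc : Cov G (↑(Aᶜ) : Set V) := by
    intro u v w huv hvw huw
    by_contra hcon
    push_neg at hcon
    obtain ⟨hu, hv, hw⟩ := hcon
    simp only [Finset.mem_coe, Finset.mem_compl, not_not] at hu hv hw
    have h2 : 1 < (G.neighborFinset v ∩ A).card := by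
      apply Finset.one_lt_card.2
      refine ⟨u, ?_, w, ?_, huw⟩
      · simp only [Finset.mem_inter, mem_neighborFinset]
        exact ⟨huv.symm, hu⟩
      · simp only [Finset.mem_inter, mem_neighborFinset]
        exact ⟨hvw, hw⟩
    have := hA v hv
    omega
  have hsum := Finset.card_compl_add_card A
  rcases le_total A.card (Aᶜ : Finset V).card with hle | hle
  · exact ⟨A, covA, by omega⟩
  · exact ⟨Aᶜ, covAc, by omega⟩

end VertexBound

theorem psi_three_subcubic [Fintype V] (G : SimpleGraph V) [DecidableRel G.Adj]
    (h : G.maxDegree ≤ 3) :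
    (psi G 3 : ℚ) ≤ min ((Fintype.card V : ℚ) / 2) ((G.edgeSet.ncard : ℚ) / 2) := by
  classical
  have hdeg : ∀ v, G.degree v ≤ 3 := fun v => le_trans (G.degree_le_maxDegree v) h
  obtain ⟨S1, hS1, hc1⟩ := exists_cov_half_vertices G hdeg
  obtain ⟨S2, hS2, hc2⟩ := exists_cov_half_edges G.edgeFinset.card G rfl
  have hm : G.edgeSet.ncard = G.edgeFinset.card := by
    have := Set.ncard_coe_finset G.edgeFinset
    rwa [coe_edgeFinset] at this
  have p1 : psi G 3 ≤ S1.card := psi_le hS1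
  have p2 : psi G 3 ≤ S2.card := psi_le hS2
  rw [le_min_iff]
  constructor
  · have q1 : (psi G 3 : ℚ) ≤ S1.card := by exact_mod_cast p1
    have q2 : 2 * (S1.card : ℚ) ≤ Fintype.card V := by exact_mod_cast hc1
    linarith
  · have q1 : (psi G 3 : ℚ) ≤ S2.card := by exact_mod_cast p2
    have q2 : 2 * (S2.card : ℚ) ≤ (G.edgeSet.ncard : ℚ) := by
      rw [hm]; exact_mod_cast hc2
    linarith
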